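/- For a traceless symmetric real n×n matrix E (n ≥ 2), every eigenvalue λ of E satisfies |λ| ≤ √((n-1)/n) · |E|, where |E| is the Frobenius norm. -/

import Mathlib

open Matrix Finset

/-- Every eigenvalue `l` of a traceless symmetric real `n × n` matrix `E` (`n ≥ 2`)
satisfies `|l| ≤ √((n-1)/n) · |E|`, where `|E|` is the Frobenius norm. -/
theorem eigenvalue_bound_traceless_symm
    (n : ℕ) (hn : 2 ≤ n) (E : Matrix (Fin n) (Fin n) ℝ)
    (hsym : E.IsSymm) (htr : E.trace = 0)
    (l : ℝ) (v : Fin n → ℝ) (hv : v ≠ 0) (heig : E.mulVec v = l • v) :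
    |l| ≤ Real.sqrt (((n : ℝ) - 1) / n) * Real.sqrt (∑ i, ∑ j, E i j ^ 2) := by
  have hE : E.IsHermitian := by
    rw [Matrix.IsHermitian, Matrix.conjTranspose]
    convert hsym.eq using 1
    ext i j
    simp
  set μ := hE.eigenvalues with hμ
  set U : Matrix (Fin n) (Fin n) ℝ := (hE.eigenvectorUnitary : Matrix (Fin n) (Fin n) ℝ)
  have hUU : star U * U = 1 := Unitary.coe_star_mul_self _
  have hUU' : U * star U = 1 := Unitary.coe_mul_star_self _
  have hspec : E = U * Matrix.diagonal μ * star U := by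
    have := hE.spectral_theorem
    simpa [U] using this
  -- trace of E is sum of eigenvalues
  have htr' : ∑ i, μ i = 0 := by
    have : E.trace = ∑ i, μ i := by
      rw [hspec, Matrix.trace_mul_cycle, hUU, Matrix.one_mul, Matrix.trace_diagonal]
    rw [← this, htr]
  -- Frobenius norm squared is sum of squared eigenvalues
  have hfrob : ∑ i, ∑ j, E i j ^ 2 = ∑ i, μ i ^ 2 := by
    have h1 : (E * E).trace = ∑ i, ∑ j, E i j ^ 2 := by
      simp only [Matrix.trace, Matrix.diag, Matrix.mul_apply]
      refine Finset.sum_congr rfl fun i _ => Finset.sum_congr rfl fun j _ => ?_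
      have : E j i = E i j := congrFun (congrFun hsym i) j
      rw [this, sq]
    have h2 : (E * E).trace = ∑ i, μ i ^ 2 := by
      conv_lhs => rw [hspec]
      rw [show U * Matrix.diagonal μ * star U * (U * Matrix.diagonal μ * star U)
            = U * (Matrix.diagonal μ * (star U * U) * Matrix.diagonal μ) * star U by
          noncomm_ring]
      rw [hUU, Matrix.mul_one, Matrix.diagonal_mul_diagonal,
        Matrix.trace_mul_cycle, hUU, Matrix.one_mul, Matrix.trace_diagonal]
      simp [sq]
    rw [← h1, h2]
  -- l is one of the eigenvalues
  obtain ⟨k, hk⟩ : ∃ k, μ k = l := by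
    by_contra hcon
    push_neg at hcon
    have hdet : (E - l • 1).det ≠ 0 := by
      have hEl : E - l • 1 = U * (Matrix.diagonal (fun i => μ i - l)) * star U := by
        have hd : Matrix.diagonal (fun i => μ i - l)
            = Matrix.diagonal μ - l • (1 : Matrix (Fin n) (Fin n) ℝ) := by
          rw [Matrix.smul_one_eq_diagonal, ← Matrix.diagonal_sub]
        rw [hspec, hd, Matrix.mul_sub, Matrix.sub_mul, Matrix.mul_smul, Matrix.mul_one,
          Matrix.smul_mul, hUU']
      rw [hEl, Matrix.det_mul, Matrix.det_mul, Matrix.det_diagonal]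
      have hU1 : U.det * (star U).det ≠ 0 := by
        have : U.det * (star U).det = (U * star U).det := (Matrix.det_mul _ _).symm
        rw [this, hUU', Matrix.det_one]; norm_num
      have hprod : ∏ i, (μ i - l) ≠ 0 :=
        Finset.prod_ne_zero_iff.mpr fun i _ => sub_ne_zero.mpr (hcon i)
      intro h
      apply hU1
      rcases mul_eq_zero.mp h with h | h
      · rcases mul_eq_zero.mp h with h | h
        · exact absurd h (by exact fun h => hU1 (by rw [h, zero_mul]))
        · exact absurd h hprod
      · rw [h, mul_zero]
    apply hv
    have : (E - l • 1).mulVec v = 0 := by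
      rw [Matrix.sub_mulVec, heig, Matrix.smul_mulVec, Matrix.one_mulVec, sub_self]
    exact Matrix.eq_zero_of_mulVec_eq_zero hdet this
  -- now the numeric estimate
  set S := ∑ i, ∑ j, E i j ^ 2 with hS
  have hSnn : 0 ≤ S := Finset.sum_nonneg fun i _ => Finset.sum_nonneg fun j _ => sq_nonneg _
  have hsum_erase : ∑ i ∈ Finset.univ.erase k, μ i = -l := by
    have := Finset.add_sum_erase Finset.univ μ (Finset.mem_univ k)
    rw [htr', hk] at this
    linarith
  have hsq_erase : ∑ i ∈ Finset.univ.erase k, μ i ^ 2 = S - l ^ 2 := by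
    have := Finset.add_sum_erase Finset.univ (fun i => μ i ^ 2) (Finset.mem_univ k)
    rw [hfrob]
    rw [show ∑ i, μ i ^ 2 = μ k ^ 2 + ∑ i ∈ Finset.univ.erase k, μ i ^ 2 from this.symm, hk]
    ring
  have hcard : ((Finset.univ.erase k).card : ℝ) = (n : ℝ) - 1 := by
    rw [Finset.card_erase_of_mem (Finset.mem_univ k), Finset.card_univ, Fintype.card_fin]
    have : (1 : ℕ) ≤ n := le_trans (by norm_num) hn
    push_cast [Nat.cast_sub this]
    ring
  have hCS : l ^ 2 ≤ ((n : ℝ) - 1) * (S - l ^ 2) := by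
    have := sq_sum_le_card_mul_sum_sq (s := Finset.univ.erase k) (f := μ)
    rw [hsum_erase, hsq_erase, hcard] at this
    simpa using this
  have hn1 : (1 : ℝ) ≤ (n : ℝ) := by exact_mod_cast le_trans (by norm_num) hn
  have hnpos : (0 : ℝ) < n := by linarith
  have hl2 : l ^ 2 ≤ ((n : ℝ) - 1) / n * S := by
    rw [div_mul_eq_mul_div, le_div_iff₀ hnpos]
    nlinarith
  calc |l| = Real.sqrt (l ^ 2) := (Real.sqrt_sq_eq_abs l).symm
    _ ≤ Real.sqrt (((n : ℝ) - 1) / n * S) := Real.sqrt_le_sqrt hl2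
    _ = Real.sqrt (((n : ℝ) - 1) / n) * Real.sqrt S := Real.sqrt_mul (div_nonneg (by linarith) (le_of_lt hnpos)) S
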